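/- There is no binary LCD [n,5,d] code for any of the parameter pairs (n,d) = (25,12), (27,13), (28,14), (29,14), (30,15); that is, for each such pair there exists no 5-dimensional linear complementary dual subspace of F_2^n whose minimum weight is d. -/

import Mathlib

set_option maxRecDepth 10000


/-- The (Hamming) weight of a vector over `F_2`. -/
def wt {n : ℕ} (x : Fin n → ZMod 2) : ℕ :=
  Finset.card (Finset.univ.filter fun i => x i ≠ 0)

/-- The dual code of a binary code `C`, with respect to the standard inner product. -/
def dualCode {n : ℕ} (C : Submodule (ZMod 2) (Fin n → ZMod 2)) :
    Submodule (ZMod 2) (Fin n → ZMod 2) where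
  carrier := {x | ∀ y ∈ C, ∑ i, x i * y i = 0}
  add_mem' := by
    intro a b ha hb y hy
    simp [Pi.add_apply, add_mul, Finset.sum_add_distrib, ha y hy, hb y hy]
  zero_mem' := by
    intro y hy
    simp
  smul_mem' := by
    intro c a ha y hy
    simp only [Pi.smul_apply, smul_eq_mul, mul_assoc, ← Finset.mul_sum, ha y hy, mul_zero]

/-- A binary code is linear complementary dual (LCD) if it meets its dual trivially. -/
def IsLCD {n : ℕ} (C : Submodule (ZMod 2) (Fin n → ZMod 2)) : Prop :=
  C ⊓ dualCode C = ⊥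

/-- The minimum weight of a binary code: the smallest weight of a nonzero codeword. -/
noncomputable def minWt {n : ℕ} (C : Submodule (ZMod 2) (Fin n → ZMod 2)) : ℕ :=
  sInf {w | ∃ x ∈ C, x ≠ 0 ∧ wt x = w}

/-- `dLCD n k` is the largest minimum weight among all binary LCD `[n,k]` codes. -/
noncomputable def dLCD (n k : ℕ) : ℕ :=
  sSup {d | ∃ C : Submodule (ZMod 2) (Fin n → ZMod 2),
    Module.finrank (ZMod 2) C = k ∧ IsLCD C ∧ minWt C = d}


namespace NoLCDAux

abbrev V : Type := Fin 5 → ZMod 2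

def dp (x y : V) : ZMod 2 := ∑ i, x i * y i

lemma dp_comm (x y : V) : dp x y = dp y x :=
  Finset.sum_congr rfl fun i _ => mul_comm _ _

lemma dp_zero_left (y : V) : dp 0 y = 0 := by simp [dp]

lemma dp_zero_right (x : V) : dp x 0 = 0 := by simp [dp]

-- decide lemmas (verified separately)
lemma zmod2_cases : ∀ a : ZMod 2, a ≠ 0 → a = 1 := by decide
lemma card_dp_one : ∀ v : V, v ≠ 0 → (Finset.univ.filter fun x : V => dp x v = 1).card = 16 := by decide
lemma card_S0 : ∀ u : V, u ≠ 0 → (Finset.univ.filter fun x : V => x ≠ 0 ∧ dp x u = 0).card = 15 := by decide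
lemma exists_perp : ∀ s : V, s ≠ 0 → ∃ z : V, z ≠ 0 ∧ dp z s = 0 := by decide
lemma K5 : ∀ (z : V) (k : Fin 5), ∑ v : V, v k * dp v z = 0 := by decide
lemma perm_fix : ∀ π : Equiv.Perm (Fin 5), π * π = 1 → ∃ i, π i = i := by decide
lemma card_hyp : ∀ u v : V, u ≠ 0 → v ≠ 0 → v ≠ u →
    (Finset.univ.filter fun x : V => dp x u = 0 ∧ dp x v = 1).card = 8 := by decide
lemma card_BE : ∀ s v : V, s ≠ 0 → v ≠ 0 → v ≠ s →
    (Finset.univ.filter fun x : V => x ≠ 0 ∧ dp x s = 0 ∧ dp x v = 0).card = 7 := by decide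
lemma card_BO : ∀ s v : V, s ≠ 0 → v ≠ 0 → v ≠ s →
    (Finset.univ.filter fun x : V => dp x s = 1 ∧ dp x v = 0).card = 8 := by decide
lemma card_AE : ∀ s v : V, s ≠ 0 → v ≠ 0 → v ≠ s →
    (Finset.univ.filter fun x : V => x ≠ 0 ∧ dp x s = 0 ∧ dp x v = 1).card = 8 := by decide
lemma card_AO : ∀ s v : V, s ≠ 0 → v ≠ 0 → v ≠ s →
    (Finset.univ.filter fun x : V => dp x s = 1 ∧ dp x v = 1).card = 8 := by decide

lemma zmod2_eq_zero {a : ZMod 2} (h : a ≠ 1) : a = 0 := by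
  by_contra h0; exact h (zmod2_cases a h0)

lemma cast_even {k : ℕ} (h : Even k) : (k : ZMod 2) = 0 := by
  rw [ZMod.natCast_eq_zero_iff]
  obtain ⟨t, rfl⟩ := h; exact ⟨t, by ring⟩

lemma cast_odd {k : ℕ} (h : ¬ Even k) : (k : ZMod 2) = 1 := by
  apply zmod2_cases
  intro h0
  rw [ZMod.natCast_eq_zero_iff] at h0
  obtain ⟨t, rfl⟩ := h0
  exact h ⟨t, by ring⟩

section Core

variable (m : V → ℕ)

def w (x : V) : ℕ := ∑ v ∈ Finset.univ.filter (fun v => dp x v = 1), m v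

def NN : ℕ := ∑ v ∈ Finset.univ.erase 0, m v

def sig : V := fun i => ∑ v : V, (m v : ZMod 2) * v i

def G : Matrix (Fin 5) (Fin 5) (ZMod 2) :=
  Matrix.of fun k j => ∑ v : V, (m v : ZMod 2) * (v k * v j)

lemma w_zero : w m 0 = 0 := by
  unfold w
  have h : (Finset.univ.filter fun v : V => dp 0 v = 1) = ∅ := by
    ext v; simp [dp_zero_left]
  rw [h, Finset.sum_empty]

lemma sum_w (A : Finset V) :
    ∑ x ∈ A, w m x = ∑ v : V, (A.filter fun x => dp x v = 1).card * m v := by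
  unfold w
  simp_rw [Finset.sum_filter]
  rw [Finset.sum_comm]
  refine Finset.sum_congr rfl fun v _ => ?_
  rw [Finset.sum_ite, Finset.sum_const, Finset.sum_const_zero, add_zero, smul_eq_mul]

lemma sum_w_univ : ∑ x : V, w m x = 16 * NN m := by
  rw [sum_w]
  have h2 : ∀ v : V, (Finset.univ.filter fun x : V => dp x v = 1).card * m v
      = if v = 0 then 0 else 16 * m v := by
    intro v
    split_ifs with h
    · subst h
      have : (Finset.univ.filter fun x : V => dp x 0 = 1) = ∅ := by
        ext x; simp [dp_zero_right]
      rw [this]; simp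
    · rw [card_dp_one v h]
  rw [Finset.sum_congr rfl fun v _ => h2 v]
  rw [Finset.sum_ite, Finset.sum_const, smul_zero, zero_add, ← Finset.mul_sum]
  have h3 : Finset.univ.filter (fun v : V => ¬ v = 0) = Finset.univ.erase 0 := by
    ext v; simp [Finset.mem_erase, and_comm]
  rw [h3]; rfl

lemma sum_w_perp (u : V) (hu : u ≠ 0) :
    ∑ x ∈ Finset.univ.filter (fun x => dp x u = 0), w m x + 8 * m u = 8 * NN m := by
  rw [sum_w]
  have h2 : ∀ v : V,
      ((Finset.univ.filter (fun x : V => dp x u = 0)).filter fun x => dp x v = 1).card * m v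
      = if v = 0 ∨ v = u then 0 else 8 * m v := by
    intro v
    rw [Finset.filter_filter]
    split_ifs with h
    · rcases h with rfl | rfl
      · have : (Finset.univ.filter fun x : V => dp x u = 0 ∧ dp x 0 = 1) = ∅ := by
          ext x; simp [dp_zero_right]
        rw [this]; simp
      · have : (Finset.univ.filter fun x : V => dp x v = 0 ∧ dp x v = 1) = ∅ := by
          ext x
          simp only [Finset.mem_filter, Finset.notMem_empty, iff_false, not_and]
          intro _ h0 h1
          rw [h0] at h1; exact absurd h1 (by decide)
        rw [this]; simp
    · push_neg at h
      rw [card_hyp u v hu h.1 h.2]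
  rw [Finset.sum_congr rfl fun v _ => h2 v]
  rw [Finset.sum_ite, Finset.sum_const, smul_zero, zero_add, ← Finset.mul_sum]
  have h3 : Finset.univ.filter (fun v : V => ¬(v = 0 ∨ v = u)) = (Finset.univ.erase 0).erase u := by
    ext v; simp only [Finset.mem_filter, Finset.mem_erase, Finset.mem_univ, and_true, true_and,
      not_or]
    tauto
  rw [h3]
  have h4 : m u + ∑ v ∈ (Finset.univ.erase 0).erase u, m v = NN m := by
    apply Finset.add_sum_erase
    simp [Finset.mem_erase, hu]
  omega

lemma sum_w_nonperp (u : V) (hu : u ≠ 0) :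
    ∑ x ∈ Finset.univ.filter (fun x => dp x u = 1), w m x = 8 * NN m + 8 * m u := by
  have hsplit := Finset.sum_filter_add_sum_filter_not Finset.univ (fun x : V => dp x u = 0) (w m)
  have hfe : Finset.univ.filter (fun x : V => ¬ dp x u = 0)
      = Finset.univ.filter (fun x : V => dp x u = 1) := by
    apply Finset.filter_congr
    intro x _
    constructor
    · exact fun h => zmod2_cases _ h
    · intro h h0; rw [h0] at h; exact absurd h (by decide)
  rw [hfe] at hsplit
  have h2 := sum_w_perp m u hu
  have h3 := sum_w_univ m
  omega

lemma w_cast (x : V) : (w m x : ZMod 2) = dp x (sig m) := by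
  unfold w
  push_cast
  rw [Finset.sum_filter]
  have h1 : ∀ v : V, (if dp x v = 1 then (m v : ZMod 2) else 0) = (m v : ZMod 2) * dp x v := by
    intro v
    by_cases h : dp x v = 1
    · rw [if_pos h, h, mul_one]
    · rw [if_neg h, zmod2_eq_zero h, mul_zero]
  rw [Finset.sum_congr rfl fun v _ => h1 v]
  unfold dp sig
  simp_rw [Finset.mul_sum]
  rw [Finset.sum_comm]
  refine Finset.sum_congr rfl fun i _ => ?_
  refine Finset.sum_congr rfl fun v _ => by ring

lemma even_w {x : V} (h : dp x (sig m) = 0) : Even (w m x) := by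
  have hc := w_cast m x
  rw [h, ZMod.natCast_eq_zero_iff] at hc
  obtain ⟨t, ht⟩ := hc
  exact ⟨t, by omega⟩

lemma odd_w {x : V} (h : dp x (sig m) = 1) : ¬ Even (w m x) := by
  intro he
  have hc := w_cast m x
  rw [h, cast_even he] at hc
  exact absurd hc.symm (by decide)

end Core
-- continuation, to be appended inside namespace (before `end NoLCDAux`)
section Core2
variable (m : V → ℕ)

lemma sum_ge_of_mem {A : Finset V} {x₀ : V} (hx₀ : x₀ ∈ A) (c b : ℕ)
    (h : ∀ x ∈ A, c ≤ w m x) (h₀ : b ≤ w m x₀) :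
    (A.card - 1) * c + b ≤ ∑ x ∈ A, w m x := by
  rw [← Finset.add_sum_erase A _ hx₀]
  have h1 : (A.erase x₀).card • c ≤ ∑ x ∈ A.erase x₀, w m x :=
    Finset.card_nsmul_le_sum _ _ _ (fun x hx => h x (Finset.mem_of_mem_erase hx))
  have h2 : (A.erase x₀).card = A.card - 1 := Finset.card_erase_of_mem hx₀
  rw [h2, smul_eq_mul] at h1
  omega

lemma two_sub_lower {P Q R : Finset V} {a b : ℕ} (hPR : P ⊆ R) (hQR : Q ⊆ R)
    (hdisj : Disjoint P Q) (ha : a ≤ ∑ x ∈ P, w m x) (hb : b ≤ ∑ x ∈ Q, w m x) :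
    a + b ≤ ∑ x ∈ R, w m x := by
  have h1 : ∑ x ∈ P ∪ Q, w m x = ∑ x ∈ P, w m x + ∑ x ∈ Q, w m x := Finset.sum_union hdisj
  have h2 : ∑ x ∈ P ∪ Q, w m x ≤ ∑ x ∈ R, w m x :=
    Finset.sum_le_sum_of_subset (Finset.union_subset hPR hQR)
  omega

lemma core_ne (n c o : ℕ) (hσ : sig m ≠ 0)
    (hN : NN m ≤ n)
    (hc : ∀ x : V, x ≠ 0 → dp x (sig m) = 0 → c ≤ w m x)
    (ho : ∀ x : V, dp x (sig m) = 1 → o ≤ w m x)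
    (ARxe : ∀ N' a t : ℕ, 15*c + 1 + 8*a ≤ 8*N' → 16*o ≤ 8*N' + 8*a → N' ≤ n →
        7*c + 8*o + 16*t ≤ 8*N' → 8*c + 8*o + 1 ≤ 8*N' + 16*t → False)
    (ARnoxe : ∀ N' a t : ℕ, 15*c + 8*a = 8*N' → 16*o ≤ 8*N' + 8*a → N' ≤ n →
        7*c + 8*o + 16*t ≤ 8*N' → 8*c + 8*o ≤ 8*N' + 16*t → False) :
    ∃ z : V, z ≠ 0 ∧ dp z (sig m) = 0 ∧
      ∀ v : V, v ≠ 0 → v ≠ sig m → Even (m v) → dp z v = 0 := by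
  set s := sig m with hs
  have hK2 := sum_w_perp m s hσ
  have hK4 := sum_w_nonperp m s hσ
  -- odd side lower bound
  have hOdd : 16 * o ≤ 8 * NN m + 8 * m s := by
    rw [← hK4]
    have hcard := card_dp_one s hσ
    have h := Finset.card_nsmul_le_sum (Finset.univ.filter fun x : V => dp x s = 1) (w m) o
      (fun x hx => ho x (Finset.mem_filter.mp hx).2)
    rw [hcard, smul_eq_mul] at h
    exact h
  -- S0
  have hS0card : (Finset.univ.filter fun x : V => x ≠ 0 ∧ dp x s = 0).card = 15 := card_S0 s hσ
  have hS0sub : ∑ x ∈ Finset.univ.filter (fun x : V => x ≠ 0 ∧ dp x s = 0), w m x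
      ≤ ∑ x ∈ Finset.univ.filter (fun x : V => dp x s = 0), w m x := by
    apply Finset.sum_le_sum_of_subset
    intro x hx
    simp only [Finset.mem_filter] at hx ⊢
    exact ⟨hx.1, hx.2.2⟩
  -- per-v machinery
  have perv : ∀ v : V, v ≠ 0 → v ≠ s →
      (8*c + 8*o ≤ 8 * NN m + 8 * m v) ∧ (7*c + 8*o + 8 * m v ≤ 8 * NN m) := by
    intro v hv0 hvs
    have hK2v := sum_w_perp m v hv0
    have hK4v := sum_w_nonperp m v hv0
    -- lower bound on perp side : BE ∪ BO
    have hBlow : 7 * c + 8 * o ≤ ∑ x ∈ Finset.univ.filter (fun x : V => dp x v = 0), w m x := by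
      apply two_sub_lower m (P := Finset.univ.filter fun x : V => x ≠ 0 ∧ dp x s = 0 ∧ dp x v = 0)
        (Q := Finset.univ.filter fun x : V => dp x s = 1 ∧ dp x v = 0)
      · intro x hx; simp only [Finset.mem_filter] at hx ⊢; exact ⟨hx.1, hx.2.2.2⟩
      · intro x hx; simp only [Finset.mem_filter] at hx ⊢; exact ⟨hx.1, hx.2.2⟩
      · rw [Finset.disjoint_left]
        intro x hx1 hx2
        simp only [Finset.mem_filter] at hx1 hx2
        rw [hx1.2.2.1] at hx2
        exact absurd hx2.2.1 (by decide)
      · have h := Finset.card_nsmul_le_sum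
          (Finset.univ.filter fun x : V => x ≠ 0 ∧ dp x s = 0 ∧ dp x v = 0) (w m) c
          (fun x hx => by
            have hx' := (Finset.mem_filter.mp hx).2
            exact hc x hx'.1 hx'.2.1)
        rw [card_BE s v hσ hv0 hvs, smul_eq_mul] at h
        exact h
      · have h := Finset.card_nsmul_le_sum
          (Finset.univ.filter fun x : V => dp x s = 1 ∧ dp x v = 0) (w m) o
          (fun x hx => ho x (Finset.mem_filter.mp hx).2.1)
        rw [card_BO s v hσ hv0 hvs, smul_eq_mul] at h
        exact h
    -- lower bound on nonperp side : AE ∪ AO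
    have hAlow : 8 * c + 8 * o ≤ ∑ x ∈ Finset.univ.filter (fun x : V => dp x v = 1), w m x := by
      apply two_sub_lower m (P := Finset.univ.filter fun x : V => x ≠ 0 ∧ dp x s = 0 ∧ dp x v = 1)
        (Q := Finset.univ.filter fun x : V => dp x s = 1 ∧ dp x v = 1)
      · intro x hx; simp only [Finset.mem_filter] at hx ⊢; exact ⟨hx.1, hx.2.2.2⟩
      · intro x hx; simp only [Finset.mem_filter] at hx ⊢; exact ⟨hx.1, hx.2.2⟩
      · rw [Finset.disjoint_left]
        intro x hx1 hx2
        simp only [Finset.mem_filter] at hx1 hx2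
        rw [hx1.2.2.1] at hx2
        exact absurd hx2.2.1 (by decide)
      · have h := Finset.card_nsmul_le_sum
          (Finset.univ.filter fun x : V => x ≠ 0 ∧ dp x s = 0 ∧ dp x v = 1) (w m) c
          (fun x hx => by
            have hx' := (Finset.mem_filter.mp hx).2
            exact hc x hx'.1 hx'.2.1)
        rw [card_AE s v hσ hv0 hvs, smul_eq_mul] at h
        exact h
      · have h := Finset.card_nsmul_le_sum
          (Finset.univ.filter fun x : V => dp x s = 1 ∧ dp x v = 1) (w m) o
          (fun x hx => ho x (Finset.mem_filter.mp hx).2.1)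
        rw [card_AO s v hσ hv0 hvs, smul_eq_mul] at h
        exact h
    omega
  by_cases hxe : ∃ x : V, x ≠ 0 ∧ dp x s = 0 ∧ c + 1 ≤ w m x
  · obtain ⟨xe, hxe0, hxes, hxew⟩ := hxe
    refine ⟨xe, hxe0, hxes, ?_⟩
    intro v hv0 hvs hEv
    by_contra hne
    have hdp1 : dp xe v = 1 := zmod2_cases _ hne
    have hK2v := sum_w_perp m v hv0
    have hK4v := sum_w_nonperp m v hv0
    -- S0 sum with xe : 15c+1
    have hSe : 15 * c + 1 ≤ ∑ x ∈ Finset.univ.filter (fun x : V => x ≠ 0 ∧ dp x s = 0), w m x := by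
      have h := sum_ge_of_mem m (A := Finset.univ.filter fun x : V => x ≠ 0 ∧ dp x s = 0)
        (x₀ := xe) (by simp [hxe0, hxes]) c (c+1)
        (fun x hx => by
          have hx' := (Finset.mem_filter.mp hx).2
          exact hc x hx'.1 hx'.2) hxew
      rw [hS0card] at h
      omega
    -- refined nonperp lower bound with xe
    have hAlow : 8 * c + 1 + 8 * o ≤ ∑ x ∈ Finset.univ.filter (fun x : V => dp x v = 1), w m x := by
      apply two_sub_lower m (P := Finset.univ.filter fun x : V => x ≠ 0 ∧ dp x s = 0 ∧ dp x v = 1)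
        (Q := Finset.univ.filter fun x : V => dp x s = 1 ∧ dp x v = 1)
      · intro x hx; simp only [Finset.mem_filter] at hx ⊢; exact ⟨hx.1, hx.2.2.2⟩
      · intro x hx; simp only [Finset.mem_filter] at hx ⊢; exact ⟨hx.1, hx.2.2⟩
      · rw [Finset.disjoint_left]
        intro x hx1 hx2
        simp only [Finset.mem_filter] at hx1 hx2
        rw [hx1.2.2.1] at hx2
        exact absurd hx2.2.1 (by decide)
      · have h := sum_ge_of_mem m
          (A := Finset.univ.filter fun x : V => x ≠ 0 ∧ dp x s = 0 ∧ dp x v = 1)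
          (x₀ := xe) (by simp [hxe0, hxes, hdp1]) c (c+1)
          (fun x hx => by
            have hx' := (Finset.mem_filter.mp hx).2
            exact hc x hx'.1 hx'.2.1) hxew
        rw [card_AE s v hσ hv0 hvs] at h
        omega
      · have h := Finset.card_nsmul_le_sum
          (Finset.univ.filter fun x : V => dp x s = 1 ∧ dp x v = 1) (w m) o
          (fun x hx => ho x (Finset.mem_filter.mp hx).2.1)
        rw [card_AO s v hσ hv0 hvs, smul_eq_mul] at h
        exact h
    have hperv := perv v hv0 hvs
    obtain ⟨t, ht⟩ := hEv
    exact ARxe (NN m) (m s) t (by omega) hOdd hN (by omega) (by omega)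
  · push_neg at hxe
    -- exact even sum : 15c + 8 m s = 8 NN
    have hup : ∑ x ∈ Finset.univ.filter (fun x : V => x ≠ 0 ∧ dp x s = 0), w m x ≤ 15 * c := by
      have h := Finset.sum_le_card_nsmul (Finset.univ.filter fun x : V => x ≠ 0 ∧ dp x s = 0)
        (w m) c (fun x hx => by
          have hx' := (Finset.mem_filter.mp hx).2
          have h1 := hxe x hx'.1 hx'.2
          omega)
      rw [hS0card, smul_eq_mul] at h
      exact h
    have hlo : 15 * c ≤ ∑ x ∈ Finset.univ.filter (fun x : V => x ≠ 0 ∧ dp x s = 0), w m x := by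
      have h := Finset.card_nsmul_le_sum (Finset.univ.filter fun x : V => x ≠ 0 ∧ dp x s = 0)
        (w m) c (fun x hx => by
          have hx' := (Finset.mem_filter.mp hx).2
          exact hc x hx'.1 hx'.2)
      rw [hS0card, smul_eq_mul] at h
      exact h
    have hfull : ∑ x ∈ Finset.univ.filter (fun x : V => dp x s = 0), w m x
        = ∑ x ∈ Finset.univ.filter (fun x : V => x ≠ 0 ∧ dp x s = 0), w m x := by
      have h1 : Finset.univ.filter (fun x : V => dp x s = 0)
          = insert 0 (Finset.univ.filter (fun x : V => x ≠ 0 ∧ dp x s = 0)) := by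
        ext x
        simp only [Finset.mem_filter, Finset.mem_insert, Finset.mem_univ, true_and]
        constructor
        · intro hdp
          by_cases hx : x = 0
          · exact Or.inl hx
          · exact Or.inr ⟨hx, hdp⟩
        · rintro (rfl | ⟨_, hdp⟩)
          · exact dp_zero_left s
          · exact hdp
      rw [h1, Finset.sum_insert (by simp), w_zero, zero_add]
    obtain ⟨z, hz0, hzs⟩ := exists_perp s hσ
    refine ⟨z, hz0, hzs, ?_⟩
    intro v hv0 hvs hEv
    exfalso
    have hperv := perv v hv0 hvs
    obtain ⟨t, ht⟩ := hEv
    exact ARnoxe (NN m) (m s) t (by omega) hOdd hN (by omega) (by omega)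

end Core2
section Core3
variable (m : V → ℕ)

lemma G_symm (k j : Fin 5) : G m k j = G m j k := by
  unfold G
  simp only [Matrix.of_apply]
  exact Finset.sum_congr rfl fun v _ => by ring

lemma mulVec_G (z : V) (k : Fin 5) :
    (G m).mulVec z k = ∑ v : V, (m v : ZMod 2) * (v k * dp v z) := by
  rw [Matrix.mulVec, dotProduct]
  unfold G
  simp only [Matrix.of_apply]
  simp_rw [Finset.sum_mul]
  rw [Finset.sum_comm]
  refine Finset.sum_congr rfl fun v _ => ?_
  unfold dp
  simp_rw [Finset.mul_sum]
  refine Finset.sum_congr rfl fun j _ => by ring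

lemma det_G_zero (hσ : sig m = 0) : (G m).det = 0 := by
  have hdiag : ∀ k, G m k k = 0 := by
    intro k
    have h1 : ∀ v : V, (m v : ZMod 2) * (v k * v k) = (m v : ZMod 2) * v k := by
      intro v
      have ha : ∀ a : ZMod 2, a * a = a := by decide
      rw [ha]
    show (∑ v : V, (m v : ZMod 2) * (v k * v k)) = 0
    rw [Finset.sum_congr rfl fun v _ => h1 v]
    exact congr_fun hσ k
  rw [Matrix.det_apply]
  refine Finset.sum_involution (fun π _ => π⁻¹) ?_ ?_ ?_ ?_
  · intro π _
    have hprod : ∏ i, G m (π i) i = ∏ i, G m (π⁻¹ i) i := by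
      have h := Equiv.prod_comp π (fun i => G m i (π⁻¹ i))
      simp only [← Equiv.Perm.mul_apply, inv_mul_cancel, Equiv.Perm.one_apply] at h
      rw [h]
      exact Finset.prod_congr rfl fun i _ => G_symm m i (π⁻¹ i)
    rw [Equiv.Perm.sign_inv, ← hprod, ← smul_add]
    have h2 : ∀ x : ZMod 2, x + x = 0 := by decide
    rw [h2, smul_zero]
  · intro π _ hf heq
    apply hf
    have hππ : π * π = 1 := by
      nth_rewrite 1 [← heq]
      exact inv_mul_cancel π
    obtain ⟨i, hi⟩ := perm_fix π hππ
    have hp : ∏ j, G m (π j) j = 0 :=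
      Finset.prod_eq_zero (Finset.mem_univ i) (by rw [hi]; exact hdiag i)
    rw [hp, smul_zero]
  · intro π _; exact Finset.mem_univ _
  · intro π _; exact inv_inv π

lemma core_main (n c o : ℕ) (hN : NN m ≤ n)
    (hc : ∀ x : V, x ≠ 0 → dp x (sig m) = 0 → c ≤ w m x)
    (ho : ∀ x : V, dp x (sig m) = 1 → o ≤ w m x)
    (ARxe : ∀ N' a t : ℕ, 15*c + 1 + 8*a ≤ 8*N' → 16*o ≤ 8*N' + 8*a → N' ≤ n →
        7*c + 8*o + 16*t ≤ 8*N' → 8*c + 8*o + 1 ≤ 8*N' + 16*t → False)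
    (ARnoxe : ∀ N' a t : ℕ, 15*c + 8*a = 8*N' → 16*o ≤ 8*N' + 8*a → N' ≤ n →
        7*c + 8*o + 16*t ≤ 8*N' → 8*c + 8*o ≤ 8*N' + 16*t → False) :
    ∃ z : V, z ≠ 0 ∧ ∀ k : Fin 5, ∑ v : V, (m v : ZMod 2) * (v k * dp v z) = 0 := by
  by_cases hσ : sig m = 0
  · have hdet := det_G_zero m hσ
    obtain ⟨z, hz0, hz⟩ := Matrix.exists_mulVec_eq_zero_iff.mpr hdet
    refine ⟨z, hz0, fun k => ?_⟩
    rw [← mulVec_G]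
    exact congr_fun hz k
  · obtain ⟨z, hz0, hzs, hD⟩ := core_ne m n c o hσ hN hc ho ARxe ARnoxe
    refine ⟨z, hz0, fun k => ?_⟩
    have hsplit : ∀ v : V, (m v : ZMod 2) * (v k * dp v z)
        = v k * dp v z + ((m v : ZMod 2) + 1) * (v k * dp v z) := by
      intro v
      have hb : ∀ b : ZMod 2, b = 1 + (b + 1) := by decide
      nth_rewrite 1 [hb ((m v : ZMod 2))]
      ring
    rw [Finset.sum_congr rfl fun v _ => hsplit v, Finset.sum_add_distrib, K5 z k, zero_add]
    apply Finset.sum_eq_zero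
    intro v _
    by_cases hev : Even (m v)
    · rw [cast_even hev, zero_add, one_mul]
      by_cases hv0 : v = 0
      · subst hv0; simp
      · by_cases hvs : v = sig m
        · subst hvs
          rw [dp_comm, hzs, mul_zero]
        · rw [dp_comm, hD v hv0 hvs hev, mul_zero]
    · rw [cast_odd hev]
      have h11 : (1 + 1 : ZMod 2) = 0 := by decide
      rw [h11, zero_mul]

end Core3


/-- Main reduction: an LCD code of dimension 5 whose nonzero weights are all `≥ d` and which
fits in length `n` gives the combinatorial data refuted by `core_main`. -/
theorem no_lcd_main (n d : ℕ)
    (h : (n, d) = (25, 12) ∨ (n, d) = (27, 13) ∨ (n, d) = (28, 14) ∨ (n, d) = (29, 14) ∨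
      (n, d) = (30, 15)) :
    ¬ ∃ C : Submodule (ZMod 2) (Fin n → ZMod 2),
      Module.finrank (ZMod 2) C = 5 ∧ IsLCD C ∧ minWt C = d := by
  rintro ⟨C, hrank, hlcd, hmin⟩
  classical
  -- basis of C, viewed in the ambient space
  let B : Module.Basis (Fin 5) (ZMod 2) C := Module.finBasisOfFinrankEq (ZMod 2) C hrank
  let g : Fin 5 → (Fin n → ZMod 2) := fun j => (B j : Fin n → ZMod 2)
  have hg_indep : LinearIndependent (ZMod 2) g :=
    B.linearIndependent.map' C.subtype (Submodule.ker_subtype C)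
  have hg_mem : ∀ j, g j ∈ C := fun j => (B j).2
  have hg_span : ∀ y ∈ C, y ∈ Submodule.span (ZMod 2) (Set.range g) := by
    intro y hy
    have h1 : Submodule.span (ZMod 2) (Set.range B) = ⊤ := B.span_eq
    have h2 : Submodule.map C.subtype (Submodule.span (ZMod 2) (Set.range B))
        = Submodule.span (ZMod 2) (Set.range g) := by
      rw [Submodule.map_span]
      congr 1
      rw [← Set.range_comp]
      rfl
    rw [h1, Submodule.map_top, Submodule.range_subtype] at h2
    rw [← h2]
    exact hy
  -- columns and multiplicities
  let col : Fin n → V := fun i j => g j i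
  let mm : V → ℕ := fun v => (Finset.univ.filter fun i => col i = v).card
  have hNn : NN mm ≤ n := by
    have h1 : ∑ v : V, mm v = n := by
      have h2 := Finset.card_eq_sum_card_fiberwise
        (f := col) (s := Finset.univ) (t := Finset.univ) (fun i _ => Finset.mem_univ (col i))
      simpa using h2.symm
    have h2 : NN mm ≤ ∑ v : V, mm v :=
      Finset.sum_le_sum_of_subset (Finset.erase_subset _ _)
    omega
  -- codewords
  have hcode : ∀ x : V, (∑ j, x j • g j) ∈ C := fun x =>
    Submodule.sum_mem _ fun j _ => Submodule.smul_mem _ _ (hg_mem j)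
  have hcoord : ∀ (x : V) (i : Fin n), (∑ j, x j • g j) i = dp x (col i) := by
    intro x i
    rw [Finset.sum_apply]
    exact Finset.sum_congr rfl fun j _ => rfl
  have hnz : ∀ x : V, x ≠ 0 → (∑ j, x j • g j) ≠ 0 := by
    intro x hx hzero
    apply hx
    funext j
    exact Fintype.linearIndependent_iff.mp hg_indep x hzero j
  have hwt : ∀ x : V, wt (∑ j, x j • g j) = w mm x := by
    intro x
    unfold wt
    have h1 : (Finset.univ.filter fun i => (∑ j, x j • g j) i ≠ 0)
        = Finset.univ.filter fun i => dp x (col i) = 1 := by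
      apply Finset.filter_congr
      intro i _
      rw [hcoord x i]
      constructor
      · exact fun h' => zmod2_cases _ h'
      · intro h' h0; rw [h'] at h0; exact absurd h0 (by decide)
    rw [h1]
    rw [Finset.card_eq_sum_card_fiberwise
      (f := col) (t := Finset.univ.filter (fun v => dp x v = 1))
      (fun i hi => by
        simp only [Finset.mem_coe, Finset.mem_filter, Finset.mem_univ, true_and] at hi ⊢
        exact hi)]
    refine Finset.sum_congr rfl fun v hv => ?_
    have hv' := (Finset.mem_filter.mp hv).2
    congr 1
    ext i
    simp only [Finset.mem_filter, Finset.mem_univ, true_and]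
    constructor
    · exact fun h' => h'.2
    · intro h'
      refine ⟨?_, h'⟩
      rw [h']
      exact hv'
  have hwlow : ∀ x : V, x ≠ 0 → d ≤ w mm x := by
    intro x hx
    rw [← hwt x, ← hmin]
    exact Nat.sInf_le ⟨_, hcode x, hnz x hx, rfl⟩
  -- apply the combinatorial core in each of the five cases
  obtain ⟨z, hz0, hzG⟩ :
      ∃ z : V, z ≠ 0 ∧ ∀ k : Fin 5, ∑ v : V, (mm v : ZMod 2) * (v k * dp v z) = 0 := by
    have hho : ∀ x : V, dp x (sig mm) = 1 → d ≤ w mm x := by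
      intro x hx
      apply hwlow
      intro h0
      rw [h0, dp_zero_left] at hx
      exact absurd hx (by decide)
    rcases h with h5 | h5 | h5 | h5 | h5 <;>
      rw [Prod.mk.injEq] at h5 <;> obtain ⟨rfl, rfl⟩ := h5
    · -- n = 25, d = 12 : c = 12, o = 13
      refine core_main mm 25 12 13 hNn (fun x hx _ => hwlow x hx) ?_ ?_ ?_
      · intro x hx
        have h1 := hho x hx
        have h2 := odd_w mm hx
        rcases Nat.even_or_odd (w mm x) with he | ho
        · exact absurd he h2
        · obtain ⟨t, ht⟩ := ho; omega
      · intro N' a t h1 h2 h3 h4 h5; omega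
      · intro N' a t h1 h2 h3 h4 h5; omega
    · -- n = 27, d = 13 : c = 14, o = 13
      refine core_main mm 27 14 13 hNn ?_ (fun x hx => hho x hx) ?_ ?_
      · intro x hx hpar
        have h1 := hwlow x hx
        have h2 := even_w mm hpar
        obtain ⟨t, ht⟩ := h2; omega
      · intro N' a t h1 h2 h3 h4 h5; omega
      · intro N' a t h1 h2 h3 h4 h5; omega
    · -- n = 28, d = 14 : c = 14, o = 15
      refine core_main mm 28 14 15 hNn (fun x hx _ => hwlow x hx) ?_ ?_ ?_
      · intro x hx
        have h1 := hho x hx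
        have h2 := odd_w mm hx
        rcases Nat.even_or_odd (w mm x) with he | ho
        · exact absurd he h2
        · obtain ⟨t, ht⟩ := ho; omega
      · intro N' a t h1 h2 h3 h4 h5; omega
      · intro N' a t h1 h2 h3 h4 h5; omega
    · -- n = 29, d = 14 : c = 14, o = 15
      refine core_main mm 29 14 15 hNn (fun x hx _ => hwlow x hx) ?_ ?_ ?_
      · intro x hx
        have h1 := hho x hx
        have h2 := odd_w mm hx
        rcases Nat.even_or_odd (w mm x) with he | ho
        · exact absurd he h2
        · obtain ⟨t, ht⟩ := ho; omega
      · intro N' a t h1 h2 h3 h4 h5; omega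
      · intro N' a t h1 h2 h3 h4 h5; omega
    · -- n = 30, d = 15 : c = 16, o = 15
      refine core_main mm 30 16 15 hNn ?_ (fun x hx => hho x hx) ?_ ?_
      · intro x hx hpar
        have h1 := hwlow x hx
        have h2 := even_w mm hpar
        obtain ⟨t, ht⟩ := h2; omega
      · intro N' a t h1 h2 h3 h4 h5; omega
      · intro N' a t h1 h2 h3 h4 h5; omega
  -- build the nonzero codeword in the hull
  have hgen : ∀ k : Fin 5, ∑ i, (∑ j, z j • g j) i * g k i = 0 := by
    intro k
    have h1 : ∀ i : Fin n, (∑ j, z j • g j) i * g k i = dp z (col i) * (col i) k := by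
      intro i
      rw [hcoord z i]
    rw [Finset.sum_congr rfl fun i _ => h1 i]
    have h2 : ∑ i, dp z (col i) * (col i) k
        = ∑ v : V, ∑ i ∈ Finset.univ.filter (fun i => col i = v), dp z (col i) * (col i) k := by
      exact (Finset.sum_fiberwise_of_maps_to (fun i _ => Finset.mem_univ (col i)) _).symm
    rw [h2]
    have h3 : ∀ v : V, ∑ i ∈ Finset.univ.filter (fun i => col i = v), dp z (col i) * (col i) k
        = (mm v : ZMod 2) * (v k * dp v z) := by
      intro v
      rw [Finset.sum_congr rfl (fun i hi => by
        rw [(Finset.mem_filter.mp hi).2, dp_comm])]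
      rw [Finset.sum_const, nsmul_eq_mul]
      ring
    rw [Finset.sum_congr rfl fun v _ => h3 v]
    exact hzG k
  have hZdual : (∑ j, z j • g j) ∈ dualCode C := by
    intro y hy
    refine Submodule.span_induction ?_ ?_ ?_ ?_ (hg_span y hy)
    · rintro x ⟨k, rfl⟩
      exact hgen k
    · simp
    · intro a b _ _ ha hb
      simp only [Pi.add_apply, mul_add, Finset.sum_add_distrib, ha, hb, add_zero]
    · intro r a _ ha
      simp only [Pi.smul_apply, smul_eq_mul, mul_left_comm, ← Finset.mul_sum, ha, mul_zero]
  have hmem : (∑ j, z j • g j) ∈ C ⊓ dualCode C := ⟨hcode z, hZdual⟩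
  rw [hlcd] at hmem
  exact hnz z hz0 ((Submodule.mem_bot _).mp hmem)


end NoLCDAux

theorem no_lcd_dim5_codes (n d : ℕ)
    (h : (n, d) = (25, 12) ∨ (n, d) = (27, 13) ∨ (n, d) = (28, 14) ∨ (n, d) = (29, 14) ∨
      (n, d) = (30, 15)) :
    ¬ ∃ C : Submodule (ZMod 2) (Fin n → ZMod 2),
      Module.finrank (ZMod 2) C = 5 ∧ IsLCD C ∧ minWt C = d :=
  NoLCDAux.no_lcd_main n d h
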